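/- arXiv:2112.03156 — 2 statements merged into one kernel-verified Lean document; each statement's English description precedes it below -/
import Mathlib

section
/- Let R = F₂[x₁, x₂, x₃, …] be the polynomial ring over the field with two elements in countably many variables. For a finite subset I of {2, 3, 4, …}, define c(I) := ∑_{i∈I} x_{i-1}² · ∏_{j ∈ I∖{i}} x_j (so c(∅) = 0, and c({i}) = x_{i-1}²). Then for all finite subsets I, J of {2, 3, …}: c(I)·c(J) = ∑_{i ∈ I∩J} c({i}) · c((IΔJ) ∪ {i}) · ∏_{j ∈ (I∩J)∖{i}} c({j+1}) + ∑_{i ∈ I∖J} c({i}) · c((IΔJ)∖{i}) · ∏_{j ∈ I∩J} c({j+1}), where IΔJ is the symmetric difference. -/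
open MvPolynomial

/-- The element `c(I) = ∑_{i∈I} x_{i-1}² ∏_{j∈I∖{i}} x_j` in `F₂[x₁,x₂,…]`. -/
noncomputable def cElt (I : Finset ℕ) : MvPolynomial ℕ (ZMod 2) :=
  ∑ i ∈ I, (X (i - 1)) ^ 2 * ∏ j ∈ I.erase i, X j

namespace CHelper

noncomputable def aa (i : ℕ) : MvPolynomial ℕ (ZMod 2) := X (i - 1) ^ 2
noncomputable def PP (S : Finset ℕ) : MvPolynomial ℕ (ZMod 2) := ∏ j ∈ S, X j

lemma cElt_eq (I : Finset ℕ) : cElt I = ∑ i ∈ I, aa i * PP (I.erase i) := rfl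

lemma cElt_single (i : ℕ) : cElt {i} = aa i := by
  simp [cElt, aa]

lemma cElt_succ (j : ℕ) : cElt {j + 1} = X j ^ 2 := by
  simp [cElt_single, aa]

lemma PP_sq (S : Finset ℕ) : ∏ j ∈ S, cElt {j+1} = PP S ^ 2 := by
  simp [cElt_succ, PP, ← Finset.prod_pow]

lemma PP_insert {i : ℕ} {S : Finset ℕ} (h : i ∉ S) : PP (insert i S) = X i * PP S :=
  Finset.prod_insert h

lemma symmDiff_eq_union (A B : Finset ℕ) : symmDiff A B = (A \ B) ∪ (B \ A) := by
  rw [symmDiff_def]; rfl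

lemma PP_mul (A B : Finset ℕ) : PP A * PP B = PP (symmDiff A B) * PP (A ∩ B) ^ 2 := by
  unfold PP
  have hA : ∏ j ∈ A, X j = (∏ j ∈ A \ B, (X j : MvPolynomial ℕ (ZMod 2))) * ∏ j ∈ A ∩ B, X j := by
    rw [← Finset.prod_union (Finset.disjoint_sdiff_inter A B), Finset.sdiff_union_inter]
  have hB : ∏ j ∈ B, X j = (∏ j ∈ B \ A, (X j : MvPolynomial ℕ (ZMod 2))) * ∏ j ∈ B ∩ A, X j := by
    rw [← Finset.prod_union (Finset.disjoint_sdiff_inter B A), Finset.sdiff_union_inter]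
  rw [symmDiff_eq_union, Finset.prod_union (by exact disjoint_sdiff_sdiff), hA, hB,
    Finset.inter_comm B A]
  ring

lemma sum_erase_sym_zero (S : Finset ℕ) (f : ℕ → ℕ → MvPolynomial ℕ (ZMod 2))
    (hsym : ∀ i ∈ S, ∀ k ∈ S, f i k = f k i) :
    ∑ i ∈ S, ∑ k ∈ S.erase i, f i k = 0 := by
  rw [Finset.sum_sigma' S (fun i => S.erase i) f]
  refine Finset.sum_involution (fun p _ => ⟨p.2, p.1⟩) ?_ ?_ ?_ ?_
  · intro a ha
    simp only [Finset.mem_sigma, Finset.mem_erase] at ha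
    rw [hsym a.1 ha.1 a.2 ha.2.2]
    exact CharTwo.add_self_eq_zero _
  · intro a ha _
    simp only [Finset.mem_sigma, Finset.mem_erase] at ha
    intro h
    have := congrArg Sigma.fst h
    simp at this
    exact ha.2.1 this
  · intro a ha
    simp only [Finset.mem_sigma, Finset.mem_erase] at ha ⊢
    exact ⟨ha.2.2, Ne.symm ha.2.1, ha.1⟩
  · intro a ha; rfl

section SetIds
variable {I J : Finset ℕ} {i k : ℕ}

lemma sd_diag (hiI : i ∈ I) (hiJ : i ∈ J) :
    symmDiff (I.erase i) (J.erase i) = symmDiff I J := by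
  ext x
  simp only [Finset.mem_symmDiff, Finset.mem_erase]
  by_cases hxi : x = i <;> simp_all

lemma int_diag :
    (I.erase i) ∩ (J.erase i) = (I ∩ J).erase i := by
  ext x
  simp only [Finset.mem_inter, Finset.mem_erase]
  tauto

lemma sd_12 (hiI : i ∈ I) (hiJ : i ∈ J) (hkJ : k ∈ J) (hkI : k ∉ I) :
    symmDiff (I.erase i) (J.erase k) = insert i ((symmDiff I J).erase k) := by
  have hik : i ≠ k := fun h => hkI (h ▸ hiI)
  ext x
  simp only [Finset.mem_symmDiff, Finset.mem_erase, Finset.mem_insert]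
  by_cases hxi : x = i <;> by_cases hxk : x = k <;> simp_all

lemma int_12 (hiI : i ∈ I) (hiJ : i ∈ J) (hkJ : k ∈ J) (hkI : k ∉ I) :
    (I.erase i) ∩ (J.erase k) = (I ∩ J).erase i := by
  ext x
  simp only [Finset.mem_inter, Finset.mem_erase]
  by_cases hxi : x = i <;> by_cases hxk : x = k <;> simp_all

lemma sd_21 (hiI : i ∈ I) (hiJ : i ∉ J) (hkI : k ∈ I) (hkJ : k ∈ J) :
    symmDiff (I.erase i) (J.erase k) = insert k ((symmDiff I J).erase i) := by
  have hik : i ≠ k := fun h => hiJ (h ▸ hkJ)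
  ext x
  simp only [Finset.mem_symmDiff, Finset.mem_erase, Finset.mem_insert]
  by_cases hxi : x = i <;> by_cases hxk : x = k <;> simp_all

lemma int_21 (hiI : i ∈ I) (hiJ : i ∉ J) (hkI : k ∈ I) (hkJ : k ∈ J) :
    (I.erase i) ∩ (J.erase k) = (I ∩ J).erase k := by
  ext x
  simp only [Finset.mem_inter, Finset.mem_erase]
  by_cases hxi : x = i <;> by_cases hxk : x = k <;> simp_all

lemma sd_22 (hiI : i ∈ I) (hiJ : i ∉ J) (hkJ : k ∈ J) (hkI : k ∉ I) :
    symmDiff (I.erase i) (J.erase k) = ((symmDiff I J).erase i).erase k := by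
  have hik : i ≠ k := fun h => hiJ (h ▸ hkJ)
  ext x
  simp only [Finset.mem_symmDiff, Finset.mem_erase]
  by_cases hxi : x = i <;> by_cases hxk : x = k <;> simp_all

lemma int_22 (hiI : i ∈ I) (hiJ : i ∉ J) (hkJ : k ∈ J) (hkI : k ∉ I) :
    (I.erase i) ∩ (J.erase k) = I ∩ J := by
  ext x
  simp only [Finset.mem_inter, Finset.mem_erase]
  by_cases hxi : x = i <;> by_cases hxk : x = k <;> simp_all

lemma sd_sym (hiI : i ∈ I) (hiJ : i ∈ J) (hkI : k ∈ I) (hkJ : k ∈ J) :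
    symmDiff (I.erase i) (J.erase k) = symmDiff (I.erase k) (J.erase i) := by
  ext x
  simp only [Finset.mem_symmDiff, Finset.mem_erase]
  by_cases hxi : x = i <;> by_cases hxk : x = k <;> simp_all

lemma int_sym (hiI : i ∈ I) (hiJ : i ∈ J) (hkI : k ∈ I) (hkJ : k ∈ J) :
    (I.erase i) ∩ (J.erase k) = (I.erase k) ∩ (J.erase i) := by
  ext x
  simp only [Finset.mem_inter, Finset.mem_erase]
  by_cases hxi : x = i <;> by_cases hxk : x = k <;> simp_all

end SetIds

lemma cElt_insert (i : ℕ) (S : Finset ℕ) (hi : i ∉ S) :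
    cElt (insert i S) = aa i * PP S + ∑ k ∈ S, aa k * (X i * PP (S.erase k)) := by
  rw [cElt_eq, Finset.sum_insert hi, Finset.erase_insert hi]
  congr 1
  refine Finset.sum_congr rfl fun k hk => ?_
  have hik : i ≠ k := fun h => hi (h ▸ hk)
  rw [Finset.erase_insert_of_ne hik,
    PP_insert (fun h => hi (Finset.mem_of_mem_erase h))]

end CHelper

open CHelper in
theorem stmt_2 (I J : Finset ℕ) (hI : ∀ i ∈ I, 2 ≤ i) (hJ : ∀ j ∈ J, 2 ≤ j) :
    cElt I * cElt J =
      (∑ i ∈ I ∩ J, cElt {i} * cElt (insert i (symmDiff I J)) *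
        ∏ j ∈ (I ∩ J).erase i, cElt {j + 1}) +
      ∑ i ∈ I \ J, cElt {i} * cElt ((symmDiff I J).erase i) *
        ∏ j ∈ I ∩ J, cElt {j + 1} := by
  classical
  set t : ℕ → ℕ → MvPolynomial ℕ (ZMod 2) :=
    fun i k => aa i * PP (I.erase i) * (aa k * PP (J.erase k)) with ht
  set g : ℕ → ℕ → MvPolynomial ℕ (ZMod 2) :=
    fun i k => aa i * aa k * (X i * PP ((symmDiff I J).erase k)) *
      PP ((I ∩ J).erase i) ^ 2 with hg
  set e : ℕ → MvPolynomial ℕ (ZMod 2) :=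
    fun i => aa i * aa i * (PP (symmDiff I J) * PP ((I ∩ J).erase i) ^ 2) with he
  set w : ℕ → ℕ → MvPolynomial ℕ (ZMod 2) :=
    fun i k => aa i * (aa k * PP (((symmDiff I J).erase i).erase k)) * PP (I ∩ J) ^ 2
    with hw
  -- membership helpers
  have hnotD : ∀ i ∈ I ∩ J, i ∉ symmDiff I J := by
    intro i hi
    simp only [Finset.mem_inter] at hi
    simp [Finset.mem_symmDiff, hi.1, hi.2]
  -- LHS expansion
  have hL : cElt I * cElt J = ∑ i ∈ I, ∑ k ∈ J, t i k := by
    rw [cElt_eq, cElt_eq, Finset.sum_mul_sum]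
  have hsplit : ∑ i ∈ I, ∑ k ∈ J, t i k
      = ((∑ i ∈ I ∩ J, ∑ k ∈ I ∩ J, t i k) + ∑ i ∈ I ∩ J, ∑ k ∈ J \ I, t i k)
        + ((∑ i ∈ I \ J, ∑ k ∈ I ∩ J, t i k) + ∑ i ∈ I \ J, ∑ k ∈ J \ I, t i k) := by
    rw [← Finset.sum_inter_add_sum_sdiff I J (fun i => ∑ k ∈ J, t i k)]
    congr 1 <;>
    · rw [← Finset.sum_add_distrib]
      refine Finset.sum_congr rfl fun i _ => ?_
      rw [← Finset.sum_inter_add_sum_sdiff J I (t i), Finset.inter_comm J I]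
  -- Block 11
  have hB11 : ∑ i ∈ I ∩ J, ∑ k ∈ I ∩ J, t i k = ∑ i ∈ I ∩ J, e i := by
    have hstep : ∀ i ∈ I ∩ J, ∑ k ∈ I ∩ J, t i k
        = t i i + ∑ k ∈ (I ∩ J).erase i, t i k :=
      fun i hi => (Finset.add_sum_erase _ _ hi).symm
    rw [Finset.sum_congr rfl hstep, Finset.sum_add_distrib]
    have hz : ∑ i ∈ I ∩ J, ∑ k ∈ (I ∩ J).erase i, t i k = 0 := by
      apply sum_erase_sym_zero
      intro i hi k hk
      simp only [Finset.mem_inter] at hi hk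
      have h1 : t i k = aa i * aa k *
          (PP (symmDiff (I.erase i) (J.erase k)) * PP ((I.erase i) ∩ (J.erase k)) ^ 2) := by
        rw [ht, ← PP_mul]; ring
      have h2 : t k i = aa i * aa k *
          (PP (symmDiff (I.erase k) (J.erase i)) * PP ((I.erase k) ∩ (J.erase i)) ^ 2) := by
        rw [ht, ← PP_mul]; ring
      rw [h1, h2, sd_sym hi.1 hi.2 hk.1 hk.2, int_sym hi.1 hi.2 hk.1 hk.2]
    rw [hz, add_zero]
    refine Finset.sum_congr rfl fun i hi => ?_
    simp only [Finset.mem_inter] at hi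
    have h1 : t i i = aa i * aa i *
        (PP (symmDiff (I.erase i) (J.erase i)) * PP ((I.erase i) ∩ (J.erase i)) ^ 2) := by
      rw [ht, ← PP_mul]; ring
    rw [h1, sd_diag hi.1 hi.2, int_diag, he]
  -- Block 12
  have hB12 : ∑ i ∈ I ∩ J, ∑ k ∈ J \ I, t i k = ∑ i ∈ I ∩ J, ∑ k ∈ J \ I, g i k := by
    refine Finset.sum_congr rfl fun i hi => Finset.sum_congr rfl fun k hk => ?_
    have hi' := Finset.mem_inter.mp hi
    have hk' := Finset.mem_sdiff.mp hk
    have hins : i ∉ (symmDiff I J).erase k := fun h =>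
      hnotD i hi (Finset.mem_of_mem_erase h)
    have h1 : t i k = aa i * aa k *
        (PP (symmDiff (I.erase i) (J.erase k)) * PP ((I.erase i) ∩ (J.erase k)) ^ 2) := by
      rw [ht, ← PP_mul]; ring
    rw [h1, sd_12 hi'.1 hi'.2 hk'.1 hk'.2, int_12 hi'.1 hi'.2 hk'.1 hk'.2,
      PP_insert hins, hg]
    ring
  -- Block 21
  have hB21 : ∑ i ∈ I \ J, ∑ k ∈ I ∩ J, t i k = ∑ i ∈ I ∩ J, ∑ k ∈ I \ J, g i k := by
    rw [Finset.sum_comm]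
    refine Finset.sum_congr rfl fun i hi => Finset.sum_congr rfl fun k hk => ?_
    have hi' := Finset.mem_inter.mp hi
    have hk' := Finset.mem_sdiff.mp hk
    have hins : i ∉ (symmDiff I J).erase k := fun h =>
      hnotD i hi (Finset.mem_of_mem_erase h)
    have h1 : t k i = aa k * aa i *
        (PP (symmDiff (I.erase k) (J.erase i)) * PP ((I.erase k) ∩ (J.erase i)) ^ 2) := by
      rw [ht, ← PP_mul]; ring
    rw [h1, sd_21 hk'.1 hk'.2 hi'.1 hi'.2, int_21 hk'.1 hk'.2 hi'.1 hi'.2,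
      PP_insert hins, hg]
    ring
  -- Block 22
  have hB22 : ∑ i ∈ I \ J, ∑ k ∈ J \ I, t i k = ∑ i ∈ I \ J, ∑ k ∈ J \ I, w i k := by
    refine Finset.sum_congr rfl fun i hi => Finset.sum_congr rfl fun k hk => ?_
    have hi' := Finset.mem_sdiff.mp hi
    have hk' := Finset.mem_sdiff.mp hk
    have h1 : t i k = aa i * aa k *
        (PP (symmDiff (I.erase i) (J.erase k)) * PP ((I.erase i) ∩ (J.erase k)) ^ 2) := by
      rw [ht, ← PP_mul]; ring
    rw [h1, sd_22 hi'.1 hi'.2 hk'.1 hk'.2, int_22 hi'.1 hi'.2 hk'.1 hk'.2, hw]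
    ring
  -- RHS first sum
  have hR1 : ∑ i ∈ I ∩ J, cElt {i} * cElt (insert i (symmDiff I J)) *
        ∏ j ∈ (I ∩ J).erase i, cElt {j + 1}
      = (∑ i ∈ I ∩ J, e i)
        + ((∑ i ∈ I ∩ J, ∑ k ∈ I \ J, g i k) + ∑ i ∈ I ∩ J, ∑ k ∈ J \ I, g i k) := by
    rw [← Finset.sum_add_distrib, ← Finset.sum_add_distrib]
    refine Finset.sum_congr rfl fun i hi => ?_
    rw [cElt_single, cElt_insert i _ (hnotD i hi), PP_sq]
    have hDsplit : ∀ f : ℕ → MvPolynomial ℕ (ZMod 2),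
        ∑ k ∈ symmDiff I J, f k = (∑ k ∈ I \ J, f k) + ∑ k ∈ J \ I, f k := by
      intro f
      rw [symmDiff_eq_union, Finset.sum_union (by exact disjoint_sdiff_sdiff)]
    rw [hDsplit]
    rw [mul_add, add_mul, mul_add, add_mul]
    congr 1
    · rw [he]; ring
    congr 1 <;>
    · rw [Finset.mul_sum, Finset.sum_mul]
      refine Finset.sum_congr rfl fun k _ => ?_
      rw [hg]; ring
  -- RHS second sum
  have hR2 : ∑ i ∈ I \ J, cElt {i} * cElt ((symmDiff I J).erase i) *
        ∏ j ∈ I ∩ J, cElt {j + 1}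
      = ∑ i ∈ I \ J, ∑ k ∈ J \ I, w i k := by
    have hstep : ∀ i ∈ I \ J, cElt {i} * cElt ((symmDiff I J).erase i) *
          ∏ j ∈ I ∩ J, cElt {j + 1}
        = (∑ k ∈ (I \ J).erase i, w i k) + ∑ k ∈ J \ I, w i k := by
      intro i hi
      have hi' := Finset.mem_sdiff.mp hi
      have hiJI : i ∉ J \ I := fun h => (Finset.mem_sdiff.mp h).2 hi'.1
      have hsplit2 : (symmDiff I J).erase i = ((I \ J).erase i) ∪ (J \ I) := by
        rw [symmDiff_eq_union, Finset.erase_union_distrib,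
          Finset.erase_eq_of_notMem hiJI]
      rw [cElt_single, cElt_eq, PP_sq, hsplit2,
        Finset.sum_union (Finset.disjoint_of_subset_left (Finset.erase_subset _ _)
          (by exact disjoint_sdiff_sdiff)),
        mul_add, add_mul, Finset.mul_sum, Finset.sum_mul, Finset.mul_sum, Finset.sum_mul]
      have hre : ∀ k, k ∈ ((I \ J).erase i) ∪ (J \ I) →
          (((I \ J).erase i) ∪ (J \ I)).erase k = ((symmDiff I J).erase i).erase k := by
        intro k _; rw [hsplit2]
      refine congrArg₂ (· + ·) ?_ ?_ <;>
      · refine Finset.sum_congr rfl fun k hk => ?_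
        rw [← hsplit2]
    rw [Finset.sum_congr rfl hstep, Finset.sum_add_distrib]
    have hz : ∑ i ∈ I \ J, ∑ k ∈ (I \ J).erase i, w i k = 0 := by
      apply sum_erase_sym_zero
      intro i _ k _
      rw [hw]
      simp only
      rw [Finset.erase_right_comm]
      ring
    rw [hz, zero_add]
  -- put it together
  rw [hL, hsplit, hB11, hB12, hB21, hB22, hR1, hR2]
  abel
end

section
/- Let R = F₂[y, x₂, x₃, x₄, …] be the polynomial ring over F₂ and let d : R → R be the unique F₂-derivation with d(y) = 0, d(x₂) = y, and d(x_i) = x_{i-1}² for all i ≥ 3. Then d ∘ d = 0 and ker d = F₂ · 1 + im d; that is, every polynomial killed by d is the sum of a constant and an element in the image of d. -/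
open MvPolynomial

/-- `R = F₂[y, x₂, x₃, …]`: the variable indexed by `1` is `y`, and the variable
indexed by `i ≥ 2` is `x_i`. -/
abbrev RP : Type := MvPolynomial {n : ℕ // 0 < n} (ZMod 2)

namespace Stmt10Aux

noncomputable section

abbrev σ' : Type := {n : ℕ // 0 < n}

/-- `ι k` is the variable of index `k+1`; `ι 0 = y`, `ι k = x_{k+1}` for `k ≥ 1`. -/
def ι (k : ℕ) : σ' := ⟨k + 1, k.succ_pos⟩

@[simp] lemma ι_val (k : ℕ) : (ι k).1 = k + 1 := rfl

@[simp] lemma ι_inj' {a b : ℕ} : ι a = ι b ↔ a = b := by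
  simp [ι, Subtype.ext_iff]

lemma ι_surj (a : σ') : ∃ m, a = ι m := by
  refine ⟨a.1 - 1, ?_⟩
  cases a with
  | mk n hn => simp only [ι, Subtype.ext_iff]; omega

/-- the exponent Finsupp of `d (X (ι k))` (for `k ≥ 1`). -/
def tmon : ℕ → (σ' →₀ ℕ)
  | 0 => 0
  | 1 => Finsupp.single (ι 0) 1
  | k + 2 => Finsupp.single (ι (k + 1)) 2

lemma tmon_apply (k m : ℕ) :
    tmon k (ι m) = if 1 ≤ k ∧ m = k - 1 then (if k = 1 then 1 else 2) else 0 := by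
  match k with
  | 0 => simp [tmon]
  | 1 =>
    simp only [tmon, Finsupp.single_apply, ι_inj']
    split_ifs <;> omega
  | k + 2 =>
    simp only [tmon, Finsupp.single_apply, ι_inj']
    split_ifs <;> omega

/-- the value of `d` on the variable `i`. -/
def DX (i : σ') : RP := if i.1 = 1 then 0 else monomial (tmon (i.1 - 1)) 1

/-- `ntriv s k` means the `k`-th "tensor factor" of the monomial `s` is nontrivial. -/
def ntriv (s : σ' →₀ ℕ) (k : ℕ) : Prop :=
  (1 ≤ k ∧ s (ι k) % 2 = 1) ∨ (k = 1 ∧ 1 ≤ s (ι 0)) ∨ (2 ≤ k ∧ 2 ≤ s (ι (k - 1)))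

instance (s : σ' →₀ ℕ) : DecidablePred (ntriv s) := fun _ => by
  unfold ntriv; infer_instance

lemma exists_ntriv {s : σ' →₀ ℕ} (hs : s ≠ 0) : ∃ k, ntriv s k := by
  obtain ⟨a, ha⟩ : ∃ a, s a ≠ 0 := by
    by_contra h
    push_neg at h
    exact hs (Finsupp.ext fun a => h a)
  obtain ⟨m, rfl⟩ := ι_surj a
  rcases m with _ | m
  · exact ⟨1, Or.inr (Or.inl ⟨rfl, by omega⟩)⟩
  · rcases Nat.mod_two_eq_zero_or_one (s (ι (m + 1))) with hp | hp
    · exact ⟨m + 2, Or.inr (Or.inr ⟨by omega, by simpa using by omega⟩)⟩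
    · exact ⟨m + 1, Or.inl ⟨by omega, hp⟩⟩

open scoped Classical in
/-- the contracting homotopy on monomials. -/
def Hm (s : σ' →₀ ℕ) : RP :=
  if h : ∃ k, ntriv s k then
    if s (ι (Nat.find h)) % 2 = 1 then 0
    else monomial (s + Finsupp.single (ι (Nat.find h)) 1 - tmon (Nat.find h)) 1
  else 0

lemma Hm_eval (t : σ' →₀ ℕ) (j : ℕ) (hj : ntriv t j) (hmin : ∀ m < j, ¬ ntriv t m) :
    Hm t = if t (ι j) % 2 = 1 then 0
      else monomial (t + Finsupp.single (ι j) 1 - tmon j) 1 := by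
  have h : ∃ k, ntriv t k := ⟨j, hj⟩
  have hfind : Nat.find h = j := by
    rw [Nat.find_eq_iff]; exact ⟨hj, hmin⟩
  unfold Hm
  rw [dif_pos h, hfind]

lemma Hm_zero : Hm 0 = 0 := by
  unfold Hm
  rw [dif_neg]
  rintro ⟨k, hk⟩
  unfold ntriv at hk
  simp only [Finsupp.coe_zero, Pi.zero_apply] at hk
  omega

/-- the contracting homotopy, as a linear map. -/
def H : RP →ₗ[ZMod 2] RP :=
  Finsupp.lsum (ZMod 2) (fun s : σ' →₀ ℕ =>
    (LinearMap.ringLmapEquivSelf (ZMod 2) (ZMod 2) RP).symm (Hm s)) ∘ₗ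
    (AddMonoidAlgebra.coeffLinearEquiv (ZMod 2)).toLinearMap

lemma H_monomial (s : σ' →₀ ℕ) (r : ZMod 2) : H (monomial s r) = r • Hm s :=
  sum_monomial_eq (b := fun s r => r • Hm s) <| zero_smul _ _

/-- the `i`-summand of `d (monomial s 1)`. -/
def term (s : σ' →₀ ℕ) (i : σ') : RP :=
  if i.1 = 1 then 0
  else monomial (s - Finsupp.single i 1 + tmon (i.1 - 1)) ((s i : ZMod 2))

lemma term_eq_zero (s : σ' →₀ ℕ) (i : σ') (h : s i = 0) : term s i = 0 := by
  unfold term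
  split_ifs
  · rfl
  · rw [h, Nat.cast_zero, map_zero]

lemma d_monomial (d : Derivation (ZMod 2) RP RP) (hd : ∀ i, d (X i) = DX i)
    (s : σ' →₀ ℕ) :
    d (monomial s (1 : ZMod 2)) = ∑ i ∈ s.support, term s i := by
  have hmk : d = mkDerivation (ZMod 2) DX :=
    derivation_ext fun i => by rw [hd, mkDerivation_X]
  rw [hmk, mkDerivation_monomial, one_smul, Finsupp.sum]
  refine Finset.sum_congr rfl fun i _ => ?_
  unfold DX term
  split_ifs
  · exact smul_zero _
  · rw [smul_eq_mul, monomial_mul, mul_one]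

lemma cast_odd {n : ℕ} (h : n % 2 = 1) : (n : ZMod 2) = 1 := by
  rw [← ZMod.natCast_mod n 2, h, Nat.cast_one]

lemma cast_even {n : ℕ} (h : n % 2 = 0) : (n : ZMod 2) = 0 := by
  rw [← ZMod.natCast_mod n 2, h, Nat.cast_zero]

lemma dval (s : σ' →₀ ℕ) (k a : ℕ) :
    (s - Finsupp.single (ι k) 1 + tmon k : σ' →₀ ℕ) (ι a)
      = s (ι a) - (if k = a then 1 else 0)
        + (if 1 ≤ k ∧ a = k - 1 then (if k = 1 then 1 else 2) else 0) := by
  simp only [Finsupp.add_apply, Finsupp.tsub_apply, Finsupp.single_apply, tmon_apply, ι_inj']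

lemma uval (s : σ' →₀ ℕ) (k a : ℕ) :
    (s + Finsupp.single (ι k) 1 - tmon k : σ' →₀ ℕ) (ι a)
      = s (ι a) + (if k = a then 1 else 0)
        - (if 1 ≤ k ∧ a = k - 1 then (if k = 1 then 1 else 2) else 0) := by
  simp only [Finsupp.add_apply, Finsupp.tsub_apply, Finsupp.single_apply, tmon_apply, ι_inj']

set_option maxHeartbeats 2000000 in
lemma key (d : Derivation (ZMod 2) RP RP) (hd : ∀ i, d (X i) = DX i)
    (s : σ' →₀ ℕ) (hs : s ≠ 0) :
    d (Hm s) + H (d (monomial s (1 : ZMod 2))) = monomial s 1 := by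
  have h : ∃ k, ntriv s k := exists_ntriv hs
  obtain ⟨j, hfind, hmin⟩ : ∃ j, ntriv s j ∧ ∀ m < j, ¬ ntriv s m :=
    ⟨Nat.find h, Nat.find_spec h, fun m hm => Nat.find_min h hm⟩
  have hj1 : 1 ≤ j := by unfold ntriv at hfind; omega
  rcases Nat.mod_two_eq_zero_or_one (s (ι j)) with hpar | hpar
  · -- Case B : the exponent of `ι j` in `s` is even
    have htpos : (j = 1 ∧ 1 ≤ s (ι 0)) ∨ (2 ≤ j ∧ 2 ≤ s (ι (j - 1))) := by
      unfold ntriv at hfind; omega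
    set u := s + Finsupp.single (ι j) 1 - tmon j with hudef
    have hHm : Hm s = monomial u 1 := by
      rw [Hm_eval s j hfind hmin, if_neg (by omega)]
    rw [hHm, d_monomial d hd u, d_monomial d hd s, map_sum]
    rw [Finset.sum_subset
        (Finset.subset_union_right : u.support ⊆ s.support ∪ u.support)
        (fun i _ hni => term_eq_zero u i (Finsupp.notMem_support_iff.1 hni))]
    rw [Finset.sum_subset
        (Finset.subset_union_left : s.support ⊆ s.support ∪ u.support)
        (fun i _ hni => by
          rw [term_eq_zero s i (Finsupp.notMem_support_iff.1 hni), map_zero])]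
    rw [← Finset.sum_add_distrib]
    have hmem : ι j ∈ s.support ∪ u.support := by
      refine Finset.mem_union_right _ (Finsupp.mem_support_iff.2 ?_)
      rw [hudef]
      simp only [uval, eq_self_iff_true, and_true, true_and, if_true, if_false]
      split_ifs <;> omega
    have hside : ∀ i ∈ s.support ∪ u.support, i ≠ ι j →
        term u i + H (term s i) = 0 := by
      intro i _ hne
      obtain ⟨m, rfl⟩ := ι_surj i
      have hmj : m ≠ j := fun e => hne (by rw [e])
      have Em1 : m = j - 1 → s (ι m) = s (ι (j - 1)) := fun h => by rw [h]
      have Em3 : j = 1 → s (ι (j - 1)) = s (ι 0) := fun h => by subst h; rfl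
      unfold term
      split_ifs with h1
      · rw [map_zero, add_zero]
      · have hm1 : 1 ≤ m := by simp only [ι_val] at h1; omega
        simp only [ι_val, Nat.add_sub_cancel]
        rcases Nat.mod_two_eq_zero_or_one (s (ι m)) with hp | hp
        · have hpu : u (ι m) % 2 = 0 := by
            rw [hudef]
            simp only [uval, eq_self_iff_true, and_true, true_and, if_true, if_false]
            split_ifs <;> omega
          rw [cast_even hp, cast_even hpu, map_zero, map_zero, map_zero, add_zero]
        · have hjm : j < m := by
            rcases Nat.lt_or_ge m j with h' | h'
            · exfalso; have := hmin m h'; unfold ntriv at this; omega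
            · omega
          have hpu : u (ι m) % 2 = 1 := by
            rw [hudef]
            simp only [uval, eq_self_iff_true, and_true, true_and, if_true, if_false]
            split_ifs <;> omega
          rw [cast_odd hp, cast_odd hpu, H_monomial, one_smul]
          have hnt3 : ntriv (s - Finsupp.single (ι m) 1 + tmon m) j := by
            unfold ntriv; simp only [dval, eq_self_iff_true, and_true, true_and, if_true, if_false]; split_ifs <;> omega
          have hmin3 : ∀ m' < j, ¬ ntriv (s - Finsupp.single (ι m) 1 + tmon m) m' := by
            intro m' hm'
            have hb := hmin m' hm'
            unfold ntriv at hb ⊢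
            simp only [dval, eq_self_iff_true, and_true, true_and, if_true, if_false]
            split_ifs <;> omega
          rw [Hm_eval _ j hnt3 hmin3, if_neg (by simp only [dval, eq_self_iff_true, and_true, true_and, if_true, if_false]; split_ifs <;> omega)]
          have he : (s - Finsupp.single (ι m) 1 + tmon m) + Finsupp.single (ι j) 1 - tmon j
              = u - Finsupp.single (ι m) 1 + tmon m := by
            rw [hudef]
            ext a
            obtain ⟨b, rfl⟩ := ι_surj a
            have Eb1 : b = j → s (ι b) = s (ι j) := fun h => by rw [h]
            have Eb2 : b = j - 1 → s (ι b) = s (ι (j - 1)) := fun h => by rw [h]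
            have Eb3 : b = 0 → s (ι b) = s (ι 0) := fun h => by rw [h]
            have Eb5 : j = 1 → s (ι (j - 1)) = s (ι 0) := fun h => by subst h; rfl
            have Eb4 : b = m → s (ι b) = s (ι m) := fun h => by rw [h]
            have Eb6 : b = m - 1 → s (ι b) = s (ι (m - 1)) := fun h => by rw [h]
            simp only [uval, dval, eq_self_iff_true, and_true, true_and, if_true, if_false]
            split_ifs <;> omega
          rw [he, CharTwo.add_self_eq_zero]
    rw [Finset.sum_eq_single_of_mem (ι j) hmem hside]
    unfold term
    have hne1 : ¬ j + 1 = 1 := by omega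
    simp only [ι_val, Nat.add_sub_cancel, if_neg hne1]
    have hpuj : u (ι j) % 2 = 1 := by
      rw [hudef]
      simp only [uval, eq_self_iff_true, and_true, true_and, if_true, if_false]
      split_ifs <;> omega
    rw [cast_even hpar, cast_odd hpuj, map_zero, map_zero, add_zero]
    have he : u - Finsupp.single (ι j) 1 + tmon j = s := by
      rw [hudef]
      ext a
      obtain ⟨b, rfl⟩ := ι_surj a
      have Eb1 : b = j → s (ι b) = s (ι j) := fun h => by rw [h]
      have Eb2 : b = j - 1 → s (ι b) = s (ι (j - 1)) := fun h => by rw [h]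
      have Eb3 : b = 0 → s (ι b) = s (ι 0) := fun h => by rw [h]
      have Eb5 : j = 1 → s (ι (j - 1)) = s (ι 0) := fun h => by subst h; rfl
      simp only [uval, dval, eq_self_iff_true, and_true, true_and, if_true, if_false]
      split_ifs <;> omega
    rw [he]
  · -- Case A : the exponent of `ι j` in `s` is odd
    have hHm : Hm s = 0 := by rw [Hm_eval s j hfind hmin, if_pos hpar]
    rw [hHm, map_zero, zero_add, d_monomial d hd, map_sum]
    have hmem : ι j ∈ s.support := Finsupp.mem_support_iff.2 (by omega)
    have hzero : ∀ i ∈ s.support, i ≠ ι j → H (term s i) = 0 := by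
      intro i _ hne
      obtain ⟨m, rfl⟩ := ι_surj i
      have hmj : m ≠ j := fun e => hne (by rw [e])
      have Em1 : m = j - 1 → s (ι m) = s (ι (j - 1)) := fun h => by rw [h]
      have Em3 : j = 1 → s (ι (j - 1)) = s (ι 0) := fun h => by subst h; rfl
      unfold term
      split_ifs with h1
      · exact map_zero H
      · have hm1 : 1 ≤ m := by simp only [ι_val] at h1; omega
        simp only [ι_val, Nat.add_sub_cancel]
        rcases Nat.mod_two_eq_zero_or_one (s (ι m)) with hp | hp
        · rw [cast_even hp, map_zero, map_zero]
        · have hjm : j < m := by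
            rcases Nat.lt_or_ge m j with h' | h'
            · exfalso; have := hmin m h'; unfold ntriv at this; omega
            · omega
          rw [cast_odd hp, H_monomial, one_smul]
          have hnt : ntriv (s - Finsupp.single (ι m) 1 + tmon m) j := by
            unfold ntriv; simp only [dval, eq_self_iff_true, and_true, true_and, if_true, if_false]; split_ifs <;> omega
          have hmint : ∀ m' < j, ¬ ntriv (s - Finsupp.single (ι m) 1 + tmon m) m' := by
            intro m' hm'
            have hb := hmin m' hm'
            unfold ntriv at hb ⊢
            simp only [dval, eq_self_iff_true, and_true, true_and, if_true, if_false]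
            split_ifs <;> omega
          rw [Hm_eval _ j hnt hmint, if_pos (by simp only [dval, eq_self_iff_true, and_true, true_and, if_true, if_false]; split_ifs <;> omega)]
    rw [Finset.sum_eq_single_of_mem (ι j) hmem hzero]
    unfold term
    have hne1 : ¬ (ι j).1 = 1 := by simp only [ι_val]; omega
    rw [if_neg hne1]
    simp only [ι_val, Nat.add_sub_cancel]
    rw [cast_odd hpar, H_monomial, one_smul]
    have hnt : ntriv (s - Finsupp.single (ι j) 1 + tmon j) j := by
      unfold ntriv; simp only [dval, eq_self_iff_true, and_true, true_and, if_true, if_false]; split_ifs <;> omega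
    have hmint : ∀ m' < j, ¬ ntriv (s - Finsupp.single (ι j) 1 + tmon j) m' := by
      intro m' hm'
      have hb := hmin m' hm'
      unfold ntriv at hb ⊢
      simp only [dval, eq_self_iff_true, and_true, true_and, if_true, if_false]
      split_ifs <;> omega
    rw [Hm_eval _ j hnt hmint, if_neg (by simp only [dval, eq_self_iff_true, and_true, true_and, if_true, if_false]; split_ifs <;> omega)]
    have he : (s - Finsupp.single (ι j) 1 + tmon j) + Finsupp.single (ι j) 1 - tmon j = s := by
      ext a
      obtain ⟨b, rfl⟩ := ι_surj a
      have Eb1 : b = j → s (ι b) = s (ι j) := fun h => by rw [h]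
      have Eb2 : b = j - 1 → s (ι b) = s (ι (j - 1)) := fun h => by rw [h]
      have Eb3 : b = 0 → s (ι b) = s (ι 0) := fun h => by rw [h]
      have Eb5 : j = 1 → s (ι (j - 1)) = s (ι 0) := fun h => by subst h; rfl
      simp only [uval, dval, eq_self_iff_true, and_true, true_and, if_true, if_false]
      split_ifs <;> omega
    rw [he]

lemma dd_X (d : Derivation (ZMod 2) RP RP) (hd : ∀ i, d (X i) = DX i) (i : σ') :
    d (d (X i)) = 0 := by
  rw [hd]
  unfold DX
  split_ifs with h1
  · exact map_zero d
  · obtain ⟨m, rfl⟩ := ι_surj i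
    rcases m with _ | _ | m
    · exact absurd rfl h1
    · rw [show tmon ((ι 1).1 - 1) = Finsupp.single (ι 0) 1 from rfl,
        ← X_pow_eq_monomial, pow_one, hd]
      unfold DX
      rw [if_pos (show ((ι 0).1 : ℕ) = 1 from rfl)]
    · rw [show tmon ((ι (m + 2)).1 - 1) = Finsupp.single (ι (m + 1)) 2 from rfl,
        ← X_pow_eq_monomial, sq, Derivation.leibniz]
      exact CharTwo.add_self_eq_zero _

lemma dd_zero (d : Derivation (ZMod 2) RP RP) (hd : ∀ i, d (X i) = DX i) (p : RP) :
    d (d p) = 0 := by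
  induction p using MvPolynomial.induction_on with
  | C a => simp
  | add p q hp hq => simp [hp, hq]
  | mul_X p i hp =>
    have h1 := dd_X d hd i
    rw [Derivation.leibniz]
    simp only [smul_eq_mul]
    rw [map_add, Derivation.leibniz, Derivation.leibniz]
    simp only [smul_eq_mul, h1, hp, mul_zero, zero_add, add_zero]
    rw [mul_comm (d (X i)) (d p)]
    exact CharTwo.add_self_eq_zero _

lemma main_id (d : Derivation (ZMod 2) RP RP) (hd : ∀ i, d (X i) = DX i) (p : RP) :
    p = C (constantCoeff p) + (d (H p) + H (d p)) := by
  induction p using MvPolynomial.induction_on' with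
  | monomial s c =>
    by_cases hs : s = (0 : σ' →₀ ℕ)
    · subst hs
      have h1 : d (monomial (0 : σ' →₀ ℕ) c) = 0 := by
        rw [monomial_zero']; exact derivation_C d c
      have h2 : H (monomial (0 : σ' →₀ ℕ) c) = 0 := by
        rw [H_monomial, Hm_zero, smul_zero]
      rw [h1, h2, map_zero, map_zero, add_zero, add_zero, constantCoeff_monomial,
        if_pos rfl, monomial_zero']
    · have hsm : c • monomial s (1 : ZMod 2) = monomial s c := by
        rw [smul_monomial, smul_eq_mul, mul_one]
      have hcc : constantCoeff (monomial s c) = 0 := by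
        rw [constantCoeff_monomial, if_neg hs]
      rw [hcc, map_zero, zero_add]
      calc monomial s c
          = c • monomial s (1 : ZMod 2) := hsm.symm
        _ = c • (d (Hm s) + H (d (monomial s (1 : ZMod 2)))) := by rw [key d hd s hs]
        _ = d (c • Hm s) + H (c • d (monomial s (1 : ZMod 2))) := by
            rw [smul_add, Derivation.map_smul, LinearMap.map_smul]
        _ = d (H (monomial s c)) + H (d (monomial s c)) := by
            rw [← H_monomial, ← Derivation.map_smul, hsm]
  | add p q hp hq =>
    conv_lhs => rw [hp, hq]
    simp only [map_add]
    ring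

end

end Stmt10Aux

theorem stmt_10 (d : Derivation (ZMod 2) RP RP)
    (hy : d (X ⟨1, one_pos⟩) = 0)
    (hx2 : d (X ⟨2, two_pos⟩) = X ⟨1, one_pos⟩)
    (hx : ∀ i : {n : ℕ // 0 < n}, ∀ h : 3 ≤ i.1,
      d (X i) = (X (⟨i.1 - 1, by omega⟩ : {n : ℕ // 0 < n})) ^ 2) :
    (∀ p : RP, d (d p) = 0) ∧
    (∀ p : RP, d p = 0 → ∃ c : ZMod 2, ∃ q : RP, p = C c + d q) := by
  have hd : ∀ i, d (X i) = Stmt10Aux.DX i := by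
    intro i
    obtain ⟨m, rfl⟩ := Stmt10Aux.ι_surj i
    rcases m with _ | _ | m
    · have e : Stmt10Aux.ι 0 = ⟨1, one_pos⟩ := rfl
      rw [e, hy]
      unfold Stmt10Aux.DX
      rw [if_pos rfl]
    · have e : Stmt10Aux.ι 1 = ⟨2, two_pos⟩ := rfl
      rw [e, hx2]
      unfold Stmt10Aux.DX
      rw [if_neg (by norm_num),
        show Stmt10Aux.tmon (((⟨2, two_pos⟩ : {n : ℕ // 0 < n})).1 - 1)
          = Finsupp.single (Stmt10Aux.ι 0) 1 from rfl,
        ← X_pow_eq_monomial, pow_one]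
      rfl
    · rw [hx (Stmt10Aux.ι (m + 2)) (by simp [Stmt10Aux.ι_val])]
      unfold Stmt10Aux.DX
      rw [if_neg (by simp [Stmt10Aux.ι_val]),
        show Stmt10Aux.tmon ((Stmt10Aux.ι (m + 2)).1 - 1)
          = Finsupp.single (Stmt10Aux.ι (m + 1)) 2 from rfl,
        X_pow_eq_monomial]
      rfl
  constructor
  · exact Stmt10Aux.dd_zero d hd
  · intro p hp
    refine ⟨constantCoeff p, Stmt10Aux.H p, ?_⟩
    have h := Stmt10Aux.main_id d hd p
    rwa [hp, map_zero, add_zero] at h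
end
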